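/- Let x : [0,T] → ℝ satisfy x(t) = ∫₀ᵗ F(τ) y(τ) dτ + C with C > 0, F, y non-negative and y(τ) ≤ √(x(τ)) for a.e. τ. Then √(x(t)) ≤ √C + (1/2)∫₀ᵗ F(τ) dτ for all t ∈ [0,T]. -/

import Mathlib

open MeasureTheory Filter

noncomputable def aseq : ℕ → ℝ
  | 0 => 1
  | n + 1 => Real.sqrt (aseq n / 2)

lemma aseq_half_le (n : ℕ) : 1/2 ≤ aseq n := by
  induction n with
  | zero => norm_num [aseq]
  | succ n ih =>
    have h4 : Real.sqrt ((1/2)/2) = 1/2 := by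
      rw [show ((1:ℝ)/2)/2 = (1/2)^2 by norm_num, Real.sqrt_sq (by norm_num)]
    calc (1/2 : ℝ) = Real.sqrt ((1/2)/2) := h4.symm
      _ ≤ Real.sqrt (aseq n / 2) := Real.sqrt_le_sqrt (by linarith)
      _ = aseq (n+1) := rfl

lemma aseq_eq (n : ℕ) : aseq n = (2:ℝ) ^ (((2:ℝ)⁻¹) ^ n - 1) := by
  induction n with
  | zero => simp [aseq]
  | succ n ih =>
    have h2 : (0:ℝ) < 2 := by norm_num
    rw [show aseq (n+1) = Real.sqrt (aseq n / 2) from rfl, ih, Real.sqrt_eq_rpow,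
      show (2:ℝ) ^ ((2:ℝ)⁻¹ ^ n - 1) / 2 = (2:ℝ) ^ ((2:ℝ)⁻¹ ^ n - 1) * (2:ℝ)^(-1:ℝ) by
        rw [Real.rpow_neg_one]; ring,
      ← Real.rpow_add h2, ← Real.rpow_mul (le_of_lt h2)]
    congr 1
    ring

lemma aseq_tendsto : Tendsto aseq atTop (nhds (1/2 : ℝ)) := by
  have h1 : Tendsto (fun n : ℕ => ((2:ℝ)⁻¹) ^ n - 1) atTop (nhds (-1 : ℝ)) := by
    have := (tendsto_pow_atTop_nhds_zero_of_lt_one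
      (by norm_num : (0:ℝ) ≤ (2:ℝ)⁻¹) (by norm_num : (2:ℝ)⁻¹ < 1)).sub
      (tendsto_const_nhds (x := (1:ℝ)))
    simpa using this
  have h2 : Tendsto (fun e : ℝ => (2:ℝ) ^ e) (nhds (-1 : ℝ)) (nhds ((2:ℝ) ^ (-1 : ℝ))) :=
    (Real.continuousAt_const_rpow (by norm_num : (2:ℝ) ≠ 0)).tendsto
  have h3 := h2.comp h1
  have h4 : ((2:ℝ) ^ (-1 : ℝ)) = 1/2 := by
    rw [Real.rpow_neg_one]; norm_num
  rw [h4] at h3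
  refine h3.congr fun n => ?_
  simp [aseq_eq n, Function.comp]

lemma primitive_mul_integrable (g : ℝ → ℝ) (hg : Integrable g) (hgnn : ∀ τ, 0 ≤ g τ) (s : ℝ) :
    IntegrableOn (fun τ => g τ * (∫ σ in Set.Ioc (0:ℝ) τ, g σ)) (Set.Ioc (0:ℝ) s) := by
  set I : ℝ → ℝ := fun τ => ∫ σ in Set.Ioc (0:ℝ) τ, g σ with hIdef
  have hImono : Monotone I := by
    intro a b hab
    exact setIntegral_mono_set hg.integrableOn (Filter.Eventually.of_forall hgnn)
      (Set.Ioc_subset_Ioc_right hab).eventuallyLE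
  have hInn : ∀ τ, 0 ≤ I τ := fun τ =>
    setIntegral_nonneg measurableSet_Ioc fun σ _ => hgnn σ
  refine Integrable.mono ((hg.const_mul (I s)).integrableOn) ?_ ?_
  · exact (hg.aestronglyMeasurable.restrict).mul
      ((hImono.measurable).aestronglyMeasurable)
  · refine (ae_restrict_mem measurableSet_Ioc).mono (fun τ hτ => ?_)
    rw [Real.norm_eq_abs, Real.norm_eq_abs, abs_of_nonneg (mul_nonneg (hgnn τ) (hInn τ)),
      abs_of_nonneg (mul_nonneg (hInn s) (hgnn τ))]
    rw [mul_comm (I s)]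
    exact mul_le_mul_of_nonneg_left (hImono hτ.2) (hgnn τ)

lemma fubini_primitive (g : ℝ → ℝ) (hg : Integrable g) (hgnn : ∀ τ, 0 ≤ g τ) (s : ℝ) :
    (∫ τ in Set.Ioc (0:ℝ) s, g τ * (∫ σ in Set.Ioc (0:ℝ) τ, g σ))
      = (∫ τ in Set.Ioc (0:ℝ) s, g τ)^2 / 2 := by
  set I : ℝ → ℝ := fun τ => ∫ σ in Set.Ioc (0:ℝ) τ, g σ with hIdef
  have hImono : Monotone I := by
    intro a b hab
    exact setIntegral_mono_set hg.integrableOn (Filter.Eventually.of_forall hgnn)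
      (Set.Ioc_subset_Ioc_right hab).eventuallyLE
  have hInn : ∀ τ, 0 ≤ I τ := fun τ =>
    setIntegral_nonneg measurableSet_Ioc fun σ _ => hgnn σ
  set μ := volume.restrict (Set.Ioc (0:ℝ) s) with hμ
  set f : ℝ → ℝ → ℝ := fun τ σ => if σ ≤ τ then g τ * g σ else 0 with hfdef
  have hfeq : Function.uncurry f
      = {p : ℝ × ℝ | p.2 ≤ p.1}.indicator (fun p => g p.1 * g p.2) := by
    ext p
    simp [f, Function.uncurry, Set.indicator_apply, Set.mem_setOf_eq]
  have hmeasset : MeasurableSet {p : ℝ × ℝ | p.2 ≤ p.1} :=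
    measurableSet_le measurable_snd measurable_fst
  have hprod : Integrable (fun p : ℝ × ℝ => g p.1 * g p.2) (μ.prod μ) :=
    (hg.restrict).mul_prod (hg.restrict)
  have hfint : Integrable (Function.uncurry f) (μ.prod μ) := by
    rw [hfeq]; exact hprod.indicator hmeasset
  have swap := integral_integral_swap hfint
  have hL : (∫ τ, (∫ σ, f τ σ ∂μ) ∂μ) = ∫ τ in Set.Ioc (0:ℝ) s, g τ * I τ := by
    rw [hμ]
    refine setIntegral_congr_fun measurableSet_Ioc (fun τ hτ => ?_)
    have h1 : (fun σ => f τ σ) = fun σ => (Set.Iic τ).indicator (fun σ => g τ * g σ) σ := by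
      ext σ; simp [f, Set.indicator_apply, Set.mem_Iic]
    rw [h1, setIntegral_indicator measurableSet_Iic, Set.Ioc_inter_Iic,
      min_eq_right hτ.2, integral_const_mul]
  have hR : (∫ σ, (∫ τ, f τ σ ∂μ) ∂μ) = ∫ σ in Set.Ioc (0:ℝ) s, g σ * (I s - I σ) := by
    rw [hμ]
    refine setIntegral_congr_fun measurableSet_Ioc (fun σ hσ => ?_)
    have h1 : (fun τ => f τ σ) = fun τ => (Set.Ici σ).indicator (fun τ => g σ * g τ) τ := by
      ext τ; simp [f, Set.indicator_apply, Set.mem_Ici, mul_comm]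
    have h2 : Set.Ioc 0 s ∩ Set.Ici σ = Set.Icc σ s := by
      ext τ
      simp only [Set.mem_inter_iff, Set.mem_Ioc, Set.mem_Ici, Set.mem_Icc]
      constructor
      · rintro ⟨⟨_, h⟩, h'⟩; exact ⟨h', h⟩
      · rintro ⟨h', h⟩; exact ⟨⟨lt_of_lt_of_le hσ.1 h', h⟩, h'⟩
    have h3 : I s - I σ = ∫ τ in Set.Icc σ s, g τ := by
      rw [integral_Icc_eq_integral_Ioc]
      have hunion : Set.Ioc (0:ℝ) σ ∪ Set.Ioc σ s = Set.Ioc (0:ℝ) s :=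
        Set.Ioc_union_Ioc_eq_Ioc (le_of_lt hσ.1) hσ.2
      have hadd : (∫ τ in Set.Ioc (0:ℝ) σ ∪ Set.Ioc σ s, g τ)
          = (∫ τ in Set.Ioc (0:ℝ) σ, g τ) + ∫ τ in Set.Ioc σ s, g τ :=
        setIntegral_union (Set.Ioc_disjoint_Ioc_of_le le_rfl) measurableSet_Ioc
          (hg.integrableOn) (hg.integrableOn)
      rw [hunion] at hadd
      simp only [hIdef]
      rw [hadd]; ring
    rw [h1, setIntegral_indicator measurableSet_Ici, h2, integral_const_mul, h3]
  have hgI_int : IntegrableOn (fun τ => g τ * I τ) (Set.Ioc (0:ℝ) s) :=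
    primitive_mul_integrable g hg hgnn s
  have hRsplit : (∫ σ in Set.Ioc (0:ℝ) s, g σ * (I s - I σ))
      = I s * I s - ∫ σ in Set.Ioc (0:ℝ) s, g σ * I σ := by
    have : (fun σ => g σ * (I s - I σ)) = fun σ => g σ * I s - g σ * I σ := by
      ext σ; ring
    rw [this, integral_sub ((hg.integrableOn).mul_const _) hgI_int, integral_mul_const]
  rw [hL, hR, hRsplit] at swap
  have : I s = ∫ τ in Set.Ioc (0:ℝ) s, g τ := rfl
  rw [← this]
  nlinarith [swap]

theorem stmt1 (T C : ℝ) (hT : 0 < T) (hC : 0 < C) (F y x : ℝ → ℝ)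
    (hF : IntegrableOn F (Set.Ioc 0 T))
    (hFpos : ∀ t, 0 ≤ F t) (hypos : ∀ t, 0 ≤ y t)
    (hymeas : Measurable y)
    (hx : ∀ t ∈ Set.Icc (0:ℝ) T, x t = (∫ τ in Set.Ioc 0 t, F τ * y τ) + C)
    (hyx : ∀ᵐ τ ∂(volume.restrict (Set.Ioc (0:ℝ) T)), y τ ≤ Real.sqrt (x τ)) :
    ∀ t ∈ Set.Icc (0:ℝ) T,
      Real.sqrt (x t) ≤ Real.sqrt C + (1 / 2) * ∫ τ in Set.Ioc 0 t, F τ := by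
  intro t ht
  obtain ⟨ht0, htT⟩ := ht
  set g0 : ℝ → ℝ := (Set.Ioc (0:ℝ) T).indicator F with hg0def
  have hg0int : Integrable g0 := (integrable_indicator_iff measurableSet_Ioc).2 hF
  have hg0nn : ∀ τ, 0 ≤ g0 τ := fun τ => Set.indicator_nonneg (fun σ _ => hFpos σ) τ
  set I : ℝ → ℝ := fun s => ∫ τ in Set.Ioc (0:ℝ) s, g0 τ with hIdef
  have hImono : Monotone I := by
    intro a b hab
    exact setIntegral_mono_set hg0int.integrableOn (Filter.Eventually.of_forall hg0nn)
      (Set.Ioc_subset_Ioc_right hab).eventuallyLE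
  have hInn : ∀ s, 0 ≤ I s := fun s =>
    setIntegral_nonneg measurableSet_Ioc fun σ _ => hg0nn σ
  have hFeqg0 : ∀ s : ℝ, s ≤ T → Set.EqOn F g0 (Set.Ioc (0:ℝ) s) := fun s hs τ hτ =>
    (Set.indicator_of_mem (Set.Ioc_subset_Ioc_right hs hτ) F).symm
  have hIF : ∀ s : ℝ, s ≤ T → (∫ τ in Set.Ioc (0:ℝ) s, F τ) = I s := fun s hs =>
    setIntegral_congr_fun measurableSet_Ioc (hFeqg0 s hs)
  have hsqC := Real.sqrt_nonneg C
  rw [hIF t htT]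
  by_cases hgint : IntegrableOn (fun τ => F τ * y τ) (Set.Ioc (0:ℝ) t)
  swap
  · rw [hx t ⟨ht0, htT⟩, integral_undef hgint, zero_add]
    nlinarith [hInn t]
  have hxge : ∀ s ∈ Set.Icc (0:ℝ) T, C ≤ x s := by
    intro s hs
    rw [hx s hs]
    have h0 : 0 ≤ ∫ τ in Set.Ioc (0:ℝ) s, F τ * y τ :=
      setIntegral_nonneg measurableSet_Ioc fun τ _ => mul_nonneg (hFpos τ) (hypos τ)
    linarith
  have key : ∀ n : ℕ, ∀ s ∈ Set.Icc (0:ℝ) t,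
      Real.sqrt (x s) ≤ Real.sqrt C + aseq n * I s := by
    intro n
    induction n with
    | zero =>
      intro s hs
      have hsT : s ≤ T := hs.2.trans htT
      have hsub : Set.Ioc (0:ℝ) s ⊆ Set.Ioc (0:ℝ) t := Set.Ioc_subset_Ioc_right hs.2
      have hgs : IntegrableOn (fun τ => F τ * y τ) (Set.Ioc (0:ℝ) s) := hgint.mono_set hsub
      have h1 : (∫ τ in Set.Ioc (0:ℝ) s, F τ * y τ)
          ≤ ∫ τ in Set.Ioc (0:ℝ) s, F τ * Real.sqrt (x s) := by
        refine integral_mono_ae hgs ((hF.mono_set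
          (Set.Ioc_subset_Ioc_right hsT)).mul_const _) ?_
        filter_upwards [ae_restrict_of_ae_restrict_of_subset
          (Set.Ioc_subset_Ioc_right hsT) hyx, ae_restrict_mem measurableSet_Ioc]
          with τ hyτ hτ
        have hxmon : x τ ≤ x s := by
          rw [hx τ ⟨le_of_lt hτ.1, hτ.2.trans hsT⟩, hx s ⟨hs.1, hsT⟩]
          have := setIntegral_mono_set hgs
            (Filter.Eventually.of_forall fun σ => mul_nonneg (hFpos σ) (hypos σ))
            (Set.Ioc_subset_Ioc_right hτ.2).eventuallyLE
          linarith
        calc F τ * y τ ≤ F τ * Real.sqrt (x τ) :=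
              mul_le_mul_of_nonneg_left hyτ (hFpos τ)
          _ ≤ F τ * Real.sqrt (x s) :=
              mul_le_mul_of_nonneg_left (Real.sqrt_le_sqrt hxmon) (hFpos τ)
      rw [integral_mul_const, hIF s hsT] at h1
      have hxeq := hx s ⟨hs.1, hsT⟩
      have hxs : x s ≤ C + I s * Real.sqrt (x s) := by linarith
      have hxpos : 0 < x s := lt_of_lt_of_le hC (hxge s ⟨hs.1, hsT⟩)
      have hu2 : Real.sqrt (x s) ^ 2 = x s := Real.sq_sqrt (le_of_lt hxpos)
      have hc2 : Real.sqrt C ^ 2 = C := Real.sq_sqrt (le_of_lt hC)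
      have ha0 : aseq 0 = 1 := rfl
      rw [ha0]
      nlinarith [Real.sqrt_nonneg (x s), hInn s, hsqC,
        mul_nonneg (hInn s) hsqC,
        sq_nonneg (Real.sqrt (x s) - Real.sqrt C - I s),
        sq_nonneg (Real.sqrt (x s) + Real.sqrt C + I s)]
    | succ n ih =>
      intro s hs
      have hsT : s ≤ T := hs.2.trans htT
      have hsub : Set.Ioc (0:ℝ) s ⊆ Set.Ioc (0:ℝ) t := Set.Ioc_subset_Ioc_right hs.2
      have hgs : IntegrableOn (fun τ => F τ * y τ) (Set.Ioc (0:ℝ) s) := hgint.mono_set hsub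
      have han : (0:ℝ) ≤ aseq n := le_trans (by norm_num) (aseq_half_le n)
      have hint2 : IntegrableOn (fun τ => g0 τ * (Real.sqrt C + aseq n * I τ))
          (Set.Ioc (0:ℝ) s) := by
        have h1 : IntegrableOn (fun τ => g0 τ * Real.sqrt C) (Set.Ioc (0:ℝ) s) :=
          (hg0int.integrableOn).mul_const _
        have h2 : IntegrableOn (fun τ => aseq n * (g0 τ * I τ)) (Set.Ioc (0:ℝ) s) :=
          (primitive_mul_integrable g0 hg0int hg0nn s).const_mul _
        have heq : (fun τ => g0 τ * (Real.sqrt C + aseq n * I τ))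
            = fun τ => g0 τ * Real.sqrt C + aseq n * (g0 τ * I τ) := by
          ext τ; ring
        rw [heq]
        exact h1.add h2
      have h1 : (∫ τ in Set.Ioc (0:ℝ) s, F τ * y τ)
          ≤ ∫ τ in Set.Ioc (0:ℝ) s, g0 τ * (Real.sqrt C + aseq n * I τ) := by
        refine integral_mono_ae hgs hint2 ?_
        filter_upwards [ae_restrict_of_ae_restrict_of_subset
          (Set.Ioc_subset_Ioc_right hsT) hyx, ae_restrict_mem measurableSet_Ioc]
          with τ hyτ hτ
        have hFg : F τ = g0 τ := hFeqg0 s hsT hτ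
        have hihτ : Real.sqrt (x τ) ≤ Real.sqrt C + aseq n * I τ :=
          ih τ ⟨le_of_lt hτ.1, hτ.2.trans hs.2⟩
        calc F τ * y τ ≤ F τ * Real.sqrt (x τ) :=
              mul_le_mul_of_nonneg_left hyτ (hFpos τ)
          _ ≤ F τ * (Real.sqrt C + aseq n * I τ) :=
              mul_le_mul_of_nonneg_left hihτ (hFpos τ)
          _ = g0 τ * (Real.sqrt C + aseq n * I τ) := by rw [hFg]
      have h2 : (∫ τ in Set.Ioc (0:ℝ) s, g0 τ * (Real.sqrt C + aseq n * I τ))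
          = Real.sqrt C * I s + aseq n * (I s ^ 2 / 2) := by
        have heq : (fun τ => g0 τ * (Real.sqrt C + aseq n * I τ))
            = fun τ => g0 τ * Real.sqrt C + aseq n * (g0 τ * I τ) := by
          ext τ; ring
        rw [heq, integral_add ((hg0int.integrableOn).mul_const _)
          ((primitive_mul_integrable g0 hg0int hg0nn s).const_mul _),
          integral_mul_const, integral_const_mul,
          fubini_primitive g0 hg0int hg0nn s]
        ring
      rw [h2] at h1
      have hxs : x s ≤ C + Real.sqrt C * I s + aseq n * (I s ^ 2 / 2) := by
        rw [hx s ⟨hs.1, hsT⟩]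
        linarith
      have hxpos : 0 < x s := lt_of_lt_of_le hC (hxge s ⟨hs.1, hsT⟩)
      have hu2 : Real.sqrt (x s) ^ 2 = x s := Real.sq_sqrt (le_of_lt hxpos)
      have hc2 : Real.sqrt C ^ 2 = C := Real.sq_sqrt (le_of_lt hC)
      have hb : aseq (n+1) = Real.sqrt (aseq n / 2) := rfl
      have hb2 : aseq (n+1) ^ 2 = aseq n / 2 := by
        rw [hb]; exact Real.sq_sqrt (by linarith)
      have hbge : (1:ℝ)/2 ≤ aseq (n+1) := aseq_half_le (n+1)
      have hbnn : (0:ℝ) ≤ aseq (n+1) := by linarith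
      have hw : 0 ≤ Real.sqrt C + aseq (n+1) * I s :=
        add_nonneg hsqC (mul_nonneg hbnn (hInn s))
      have hsq : x s ≤ (Real.sqrt C + aseq (n+1) * I s) ^ 2 := by
        nlinarith [mul_nonneg (mul_nonneg hsqC (hInn s))
          (by linarith : (0:ℝ) ≤ 2 * aseq (n+1) - 1)]
      calc Real.sqrt (x s) ≤ Real.sqrt ((Real.sqrt C + aseq (n+1) * I s) ^ 2) :=
            Real.sqrt_le_sqrt hsq
        _ = Real.sqrt C + aseq (n+1) * I s := Real.sqrt_sq hw
  have hlim : Tendsto (fun n => Real.sqrt C + aseq n * I t) atTop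
      (nhds (Real.sqrt C + (1/2) * I t)) :=
    tendsto_const_nhds.add (aseq_tendsto.mul_const (I t))
  exact ge_of_tendsto hlim (Filter.Eventually.of_forall fun n =>
    key n t ⟨ht0, le_refl t⟩)
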